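/- For each α ∈ ℝ, the map G × G → ℝ, (a, b) ↦ D^α(a‖b), is of class C^∞ (infinitely Fréchet differentiable). -/

import Mathlib

open MeasureTheory BoundedContinuousFunction

noncomputable section

namespace Paper

variable {Y : Type*} [TopologicalSpace Y]

/-- Pointwise exponential map on `G = C_b(B;ℝ)`: `expG a x = exp (a x)`. -/
def expG (a : BoundedContinuousFunction Y ℝ) : BoundedContinuousFunction Y ℝ :=
  BoundedContinuousFunction.ofNormedAddCommGroup (fun x => Real.exp (a x))
    (Real.continuous_exp.comp a.continuous) (Real.exp ‖a‖)
    (fun x => by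
      rw [Real.norm_eq_abs, abs_of_pos (Real.exp_pos _)]
      exact Real.exp_le_exp.2 ((le_abs_self _).trans (a.norm_coe_le_norm x)))

@[simp] lemma expG_apply (a : BoundedContinuousFunction Y ℝ) (x : Y) :
    expG a x = Real.exp (a x) := rfl

/-- Amari's α-embedding chart `φ_α`. -/
def phi (α : ℝ) (a : BoundedContinuousFunction Y ℝ) : BoundedContinuousFunction Y ℝ :=
  if α = 1 then a else (2 / (1 - α)) • (expG (((1 - α) / 2) • a) - 1)

variable [MeasurableSpace Y]

/-- The α-divergence `D^α(a‖b)` (for `α ≠ ±1`) between the finite measures with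
`μ`-densities `exp_G(a)` and `exp_G(b)`. -/
def Dalpha (μ : Measure Y) (α : ℝ) (a b : BoundedContinuousFunction Y ℝ) : ℝ :=
  (2 / (1 + α)) * ∫ x, (phi (-1) a x - phi α a x) ∂μ
    + (2 / (1 - α)) * ∫ x, (phi (-1) b x - phi (-α) b x) ∂μ
    - ∫ x, phi α a x * phi (-α) b x ∂μ

/-- The extended Kullback–Leibler divergence `D^{−1}(a‖b)`. -/
def DKL (μ : Measure Y) (a b : BoundedContinuousFunction Y ℝ) : ℝ :=
  ∫ x, (expG b x - expG a x) ∂μ + ∫ x, expG a x * (a x - b x) ∂μ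

end Paper

namespace Paper

variable {Y : Type*} [TopologicalSpace Y] [MeasurableSpace Y]

/-- The α-divergence for all `α ∈ ℝ`, including the limiting cases `α = ±1`. -/
def Dfull (μ : Measure Y) (α : ℝ) (a b : BoundedContinuousFunction Y ℝ) : ℝ :=
  if α = -1 then DKL μ a b else if α = 1 then DKL μ b a else Dalpha μ α a b

end Paper

namespace Paper

section Aux

variable {Y : Type*} [TopologicalSpace Y]

/-- Evaluation at a point as a ring homomorphism on `C_b(Y;ℝ)`. -/
def evalRingHom (x : Y) : BoundedContinuousFunction Y ℝ →+* ℝ where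
  toFun f := f x
  map_one' := rfl
  map_mul' _ _ := rfl
  map_zero' := rfl
  map_add' _ _ := rfl

lemma expG_eq_exp (a : BoundedContinuousFunction Y ℝ) :
    expG a = NormedSpace.exp a := by
  ext x
  rw [expG_apply, Real.exp_eq_exp_ℝ]
  exact (NormedSpace.map_exp (evalRingHom x)
    (BoundedContinuousFunction.evalCLM ℝ x).continuous a).symm

lemma contDiff_expG :
    ContDiff ℝ (⊤ : ℕ∞) (expG : BoundedContinuousFunction Y ℝ → BoundedContinuousFunction Y ℝ) := by
  have h : (expG : BoundedContinuousFunction Y ℝ → BoundedContinuousFunction Y ℝ)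
      = NormedSpace.exp := funext expG_eq_exp
  rw [h]
  exact contDiff_iff_contDiffAt.mpr fun x => (NormedSpace.exp_analytic (𝕂 := ℝ) x).contDiffAt

lemma contDiff_phi (α : ℝ) :
    ContDiff ℝ (⊤ : ℕ∞) (phi α : BoundedContinuousFunction Y ℝ → BoundedContinuousFunction Y ℝ) := by
  unfold phi
  split_ifs
  · exact contDiff_id
  · exact ((contDiff_expG.comp (contDiff_id.const_smul _)).sub contDiff_const).const_smul _

variable [MeasurableSpace Y] [OpensMeasurableSpace Y]

/-- Integration against a finite measure as a continuous linear functional on `C_b(Y;ℝ)`. -/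
def intCLM (μ : Measure Y) [IsFiniteMeasure μ] : BoundedContinuousFunction Y ℝ →L[ℝ] ℝ :=
  LinearMap.mkContinuous
    { toFun := fun f => ∫ x, f x ∂μ
      map_add' := fun f g => by
        simp only [BoundedContinuousFunction.coe_add, Pi.add_apply]
        exact integral_add (f.integrable μ) (g.integrable μ)
      map_smul' := fun c f => by
        simp only [BoundedContinuousFunction.coe_smul, Pi.smul_apply, integral_smul,
          RingHom.id_apply] }
    (μ Set.univ).toReal
    (fun f => f.norm_integral_le_mul_norm μ)

@[simp] lemma intCLM_apply (μ : Measure Y) [IsFiniteMeasure μ]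
    (f : BoundedContinuousFunction Y ℝ) : intCLM μ f = ∫ x, f x ∂μ := rfl

lemma contDiff_DKL (μ : Measure Y) [IsFiniteMeasure μ] :
    ContDiff ℝ (⊤ : ℕ∞)
      (fun p : BoundedContinuousFunction Y ℝ × BoundedContinuousFunction Y ℝ =>
        DKL μ p.1 p.2) := by
  have h : (fun p : BoundedContinuousFunction Y ℝ × BoundedContinuousFunction Y ℝ =>
        DKL μ p.1 p.2)
      = fun p => intCLM μ (expG p.2 - expG p.1) + intCLM μ (expG p.1 * (p.1 - p.2)) := by
    funext p
    simp [DKL, BoundedContinuousFunction.coe_sub, BoundedContinuousFunction.coe_mul]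
  rw [h]
  exact ((intCLM μ).contDiff.comp
      ((contDiff_expG.comp contDiff_snd).sub (contDiff_expG.comp contDiff_fst))).add
    ((intCLM μ).contDiff.comp
      ((contDiff_expG.comp contDiff_fst).mul (contDiff_fst.sub contDiff_snd)))

lemma contDiff_DKL_swap (μ : Measure Y) [IsFiniteMeasure μ] :
    ContDiff ℝ (⊤ : ℕ∞)
      (fun p : BoundedContinuousFunction Y ℝ × BoundedContinuousFunction Y ℝ =>
        DKL μ p.2 p.1) := by
  have h : (fun p : BoundedContinuousFunction Y ℝ × BoundedContinuousFunction Y ℝ =>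
        DKL μ p.2 p.1)
      = fun p => intCLM μ (expG p.1 - expG p.2) + intCLM μ (expG p.2 * (p.2 - p.1)) := by
    funext p
    simp [DKL, BoundedContinuousFunction.coe_sub, BoundedContinuousFunction.coe_mul]
  rw [h]
  exact ((intCLM μ).contDiff.comp
      ((contDiff_expG.comp contDiff_fst).sub (contDiff_expG.comp contDiff_snd))).add
    ((intCLM μ).contDiff.comp
      ((contDiff_expG.comp contDiff_snd).mul (contDiff_snd.sub contDiff_fst)))

lemma contDiff_Dalpha (μ : Measure Y) [IsFiniteMeasure μ] (α : ℝ) :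
    ContDiff ℝ (⊤ : ℕ∞)
      (fun p : BoundedContinuousFunction Y ℝ × BoundedContinuousFunction Y ℝ =>
        Dalpha μ α p.1 p.2) := by
  have h : (fun p : BoundedContinuousFunction Y ℝ × BoundedContinuousFunction Y ℝ =>
        Dalpha μ α p.1 p.2)
      = fun p => (2 / (1 + α)) * intCLM μ (phi (-1) p.1 - phi α p.1)
          + (2 / (1 - α)) * intCLM μ (phi (-1) p.2 - phi (-α) p.2)
          - intCLM μ (phi α p.1 * phi (-α) p.2) := by
    funext p
    simp [Dalpha, BoundedContinuousFunction.coe_sub, BoundedContinuousFunction.coe_mul]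
  rw [h]
  exact ((contDiff_const.mul ((intCLM μ).contDiff.comp
          (((contDiff_phi (-1)).comp contDiff_fst).sub ((contDiff_phi α).comp contDiff_fst)))).add
      (contDiff_const.mul ((intCLM μ).contDiff.comp
          (((contDiff_phi (-1)).comp contDiff_snd).sub
            ((contDiff_phi (-α)).comp contDiff_snd))))).sub
    ((intCLM μ).contDiff.comp
      (((contDiff_phi α).comp contDiff_fst).mul ((contDiff_phi (-α)).comp contDiff_snd)))

end Aux

end Paper


set_option maxHeartbeats 1000000 in
/-- for each `α ∈ ℝ`, the map `(a, b) ↦ D^α(a‖b)` is of class `C^∞`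
(infinitely Fréchet differentiable) on `G × G`. -/
theorem statement_12 {X : Type*} [NormedAddCommGroup X] [NormedSpace ℝ X]
    [MeasurableSpace X] [OpensMeasurableSpace X]
    (B : Set X) (hB : IsOpen B) (hBne : B.Nonempty)
    (μ : Measure B) [IsProbabilityMeasure μ] (α : ℝ) :
    ContDiff ℝ (⊤ : ℕ∞)
      (fun p : BoundedContinuousFunction B ℝ × BoundedContinuousFunction B ℝ =>
        Paper.Dfull μ α p.1 p.2) := by
  unfold Paper.Dfull
  split_ifs
  · exact Paper.contDiff_DKL μ
  · exact Paper.contDiff_DKL_swap μ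
  · exact Paper.contDiff_Dalpha μ α
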